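/- Let V be a finite-dimensional complex vector space with a direct sum decomposition V = V₁ ⊕ V₂, and let G ⊂ GL(V) be the subgroup of block lower-triangular automorphisms g = [[I,0],[A,B]] with B ∈ GL(V₂) and A ∈ Hom(V₁,V₂). Suppose s₁,…,s_N ∈ V have decompositions sᵢ = uᵢ + vᵢ with uᵢ ∈ V₁, vᵢ ∈ V₂, such that u₁,…,u_m are linearly independent and u_{m+1} = … = u_N = 0, and suppose t₁,…,t_N ∈ V have t_i = u_i + v_i' (same V₁-components) with v'_{m+1},…,v'_N linearly independent in V₂. Then there exists g ∈ G with g(t_i) = s_i for all i, so in particular g maps the span of t₁,…,t_N onto the span of s₁,…,s_N. -/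

import Mathlib

open Set

lemma sumExtend_inl {K V ι : Type*} [DivisionRing K] [AddCommGroup V] [Module K V]
    {f : ι → V} (hs : LinearIndependent K f) (i : ι) :
    Module.Basis.sumExtend hs (Sum.inl i) = f i := by
  unfold Module.Basis.sumExtend
  rw [Module.Basis.reindex_apply]
  simp only [Equiv.symm_symm, Trans.trans, Equiv.trans_apply, Equiv.sumCongr_apply, Sum.map_inl,
    Equiv.Set.sumDiffSubset_apply_inl]
  rw [Module.Basis.extend_apply_self]
  rfl

/-- the key linear-algebra step in Claim `action`: a block
lower-triangular automorphism `g = [[I,0],[A,B]]` mapping `tᵢ` to `sᵢ`. -/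
theorem stmt_0 (V : Type*) [AddCommGroup V] [Module ℂ V] [FiniteDimensional ℂ V]
    (V₁ V₂ : Submodule ℂ V) (hcompl : IsCompl V₁ V₂)
    (N m : ℕ) (hm : m ≤ N)
    (s t u v v' : Fin N → V)
    (hu : ∀ i, u i ∈ V₁) (hv : ∀ i, v i ∈ V₂) (hv' : ∀ i, v' i ∈ V₂)
    (hs : ∀ i, s i = u i + v i) (ht : ∀ i, t i = u i + v' i)
    (huli : LinearIndependent ℂ (fun i : {i : Fin N // (i : ℕ) < m} => u i))
    (hu0 : ∀ i : Fin N, m ≤ (i : ℕ) → u i = 0)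
    (hvli : LinearIndependent ℂ (fun i : {i : Fin N // m ≤ (i : ℕ)} => v i))
    (hv'li : LinearIndependent ℂ (fun i : {i : Fin N // m ≤ (i : ℕ)} => v' i)) :
    ∃ g : V ≃ₗ[ℂ] V,
      (∀ x ∈ V₂, g x ∈ V₂) ∧ (∀ x ∈ V₁, g x - x ∈ V₂) ∧
      (∀ i, g (t i) = s i) ∧
      Submodule.map (g : V →ₗ[ℂ] V) (Submodule.span ℂ (Set.range t))
        = Submodule.span ℂ (Set.range s) := by
  classical
  -- families inside V₂ and V₁
  set ι := {i : Fin N // m ≤ (i : ℕ)}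
  set κ := {i : Fin N // (i : ℕ) < m}
  let w : ι → V₂ := fun i => ⟨v i, hv i⟩
  let w' : ι → V₂ := fun i => ⟨v' i, hv' i⟩
  let c : κ → V₁ := fun i => ⟨u i, hu i⟩
  have hw : LinearIndependent ℂ w :=
    LinearIndependent.of_comp V₂.subtype (by simpa [w, Function.comp_def] using hvli)
  have hw' : LinearIndependent ℂ w' :=
    LinearIndependent.of_comp V₂.subtype (by simpa [w', Function.comp_def] using hv'li)
  have hc : LinearIndependent ℂ c :=
    LinearIndependent.of_comp V₁.subtype (by simpa [c, Function.comp_def] using huli)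
  -- bases of V₂ extending w and w'
  let b : Module.Basis (ι ⊕ _) ℂ V₂ := Module.Basis.sumExtend hw
  let b' : Module.Basis (ι ⊕ _) ℂ V₂ := Module.Basis.sumExtend hw'
  haveI : Finite (ι ⊕ Module.Basis.sumExtendIndex hw) :=
    @Finite.of_fintype _ (FiniteDimensional.fintypeBasisIndex b)
  haveI : Finite (ι ⊕ Module.Basis.sumExtendIndex hw') :=
    @Finite.of_fintype _ (FiniteDimensional.fintypeBasisIndex b')
  haveI : Finite (Module.Basis.sumExtendIndex hw) := Finite.of_injective Sum.inr (Sum.inr_injective (α := ι))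
  haveI : Finite (Module.Basis.sumExtendIndex hw') := Finite.of_injective Sum.inr (Sum.inr_injective (α := ι))
  haveI : Finite ι := Finite.of_injective Sum.inl (Sum.inl_injective (β := Module.Basis.sumExtendIndex hw))
  haveI : Fintype (Module.Basis.sumExtendIndex hw) := Fintype.ofFinite _
  haveI : Fintype (Module.Basis.sumExtendIndex hw') := Fintype.ofFinite _
  have hcard : Fintype.card (Module.Basis.sumExtendIndex hw') = Fintype.card (Module.Basis.sumExtendIndex hw) := by
    have h1 : Nat.card (ι ⊕ Module.Basis.sumExtendIndex hw) = Nat.card (ι ⊕ Module.Basis.sumExtendIndex hw') :=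
      Nat.card_congr (b.indexEquiv b')
    rw [Nat.card_sum, Nat.card_sum] at h1
    rw [← Nat.card_eq_fintype_card, ← Nat.card_eq_fintype_card]
    omega
  let e : Module.Basis.sumExtendIndex hw' ≃ Module.Basis.sumExtendIndex hw := Fintype.equivOfCardEq hcard
  -- the automorphism B of V₂
  let B : V₂ ≃ₗ[ℂ] V₂ := b'.equiv b (Equiv.sumCongr (Equiv.refl ι) e)
  have hB : ∀ i : ι, B (w' i) = w i := by
    intro i
    have h1 : b' (Sum.inl i) = w' i := sumExtend_inl hw' i
    have h2 : b (Sum.inl i) = w i := sumExtend_inl hw i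
    rw [← h1, Module.Basis.equiv_apply]
    simpa using h2
  -- basis of V₁ extending c, and the map A : V₁ →ₗ V₂
  let d : Module.Basis (κ ⊕ _) ℂ V₁ := Module.Basis.sumExtend hc
  let A : V₁ →ₗ[ℂ] V₂ := d.constr ℂ (Sum.elim
    (fun i : κ => (⟨v i, hv i⟩ : V₂) - B ⟨v' i, hv' i⟩) (fun _ => 0))
  have hA : ∀ i : κ, A (c i) = (⟨v i, hv i⟩ : V₂) - B ⟨v' i, hv' i⟩ := by
    intro i
    have h1 : d (Sum.inl i) = c i := sumExtend_inl hc i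
    rw [← h1, Module.Basis.constr_basis]
    rfl
  -- the block lower triangular equivalence on V₁ × V₂
  let F : V₁ × V₂ →ₗ[ℂ] V₁ × V₂ :=
    LinearMap.prod (LinearMap.fst ℂ V₁ V₂)
      (A ∘ₗ LinearMap.fst ℂ V₁ V₂ + B.toLinearMap ∘ₗ LinearMap.snd ℂ V₁ V₂)
  let Gm : V₁ × V₂ →ₗ[ℂ] V₁ × V₂ :=
    LinearMap.prod (LinearMap.fst ℂ V₁ V₂)
      (B.symm.toLinearMap ∘ₗ (LinearMap.snd ℂ V₁ V₂ - A ∘ₗ LinearMap.fst ℂ V₁ V₂))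
  let E : (V₁ × V₂) ≃ₗ[ℂ] (V₁ × V₂) := LinearEquiv.ofLinear F Gm
    (by ext x <;> simp [F, Gm]) (by ext x <;> simp [F, Gm])
  let P : (V₁ × V₂) ≃ₗ[ℂ] V := Submodule.prodEquivOfIsCompl V₁ V₂ hcompl
  let g : V ≃ₗ[ℂ] V := (P.symm.trans E).trans P
  have hg : ∀ (x₁ : V₁) (x₂ : V₂), g ((x₁ : V) + x₂) = x₁ + A x₁ + B x₂ := by
    intro x₁ x₂
    have hsymm : P.symm ((x₁ : V) + (x₂ : V)) = (x₁, x₂) := by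
      rw [LinearEquiv.symm_apply_eq]
      rfl
    show P (E (P.symm _)) = _
    rw [hsymm]
    show P (F (x₁, x₂)) = _
    simp [F, P, Submodule.coe_prodEquivOfIsCompl', add_assoc]
  have hgt : ∀ i, g (t i) = s i := by
    intro i
    rcases lt_or_ge (i : ℕ) m with him | him
    · have := hg ⟨u i, hu i⟩ ⟨v' i, hv' i⟩
      rw [ht i, hs i, this, hA ⟨i, him⟩]
      push_cast
      abel
    · have := hg ⟨u i, hu i⟩ ⟨v' i, hv' i⟩
      have h0 : (⟨u i, hu i⟩ : V₁) = 0 := by simpa using hu0 i him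
      rw [ht i, hs i, this, hB ⟨i, him⟩, h0]
      simp [w, hu0 i him]
  refine ⟨g, ?_, ?_, hgt, ?_⟩
  · intro x hx
    have := hg 0 ⟨x, hx⟩
    simp only [Submodule.coe_zero, zero_add, map_zero] at this
    rw [this]
    exact (B ⟨x, hx⟩).2
  · intro x hx
    have := hg ⟨x, hx⟩ 0
    simp only [Submodule.coe_zero, add_zero, map_zero] at this
    rw [this]
    simpa using (A ⟨x, hx⟩).2
  · rw [Submodule.map_span, ← Set.range_comp]
    congr 1
    exact congrArg _ (funext hgt)
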